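/- Let P ↷ I be a group action with an indiscernible support function supp : [I]^{<ω} → [ω]^{<ω}. If a ∈ cl^min(B) (i.e., Krk(a, B) < ∞) for a finite B ⊆ I and a ∈ I, then supp(B ∪ {a}) = supp(B). -/
import Mathlib


/-- `a' ≅_B a`: some `g ∈ P` fixes `B` pointwise and sends `a` to `a'`. -/
def ConjOver (P : Type*) [Group P] {I : Type*} [MulAction P I] (B : Set I) (a a' : I) : Prop :=
  ∃ g : P, (∀ b ∈ B, g • b = b) ∧ g • a = a'

/-- Disjointifying rank: `KrkLe P α a B` means `Krk(a, B) ≤ α`. -/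
def KrkLe (P : Type*) [Group P] {I : Type*} [MulAction P I] (α : Ordinal) (a : I) (B : Set I) : Prop :=
  (∀ g : P, (∀ b ∈ B, g • b = b) → g • a = a) ∨
  (∃ c : I, ∀ c' : I, ConjOver P B c c' →
    ∃ β : Ordinal, ∃ _ : β < α, KrkLe P β a (insert c' B)) ∨
  (∀ a' : I, ConjOver P B a a' →
    (∃ β : Ordinal, ∃ _ : β < α, KrkLe P β a (insert a' B)) ∨
    (∃ β : Ordinal, ∃ _ : β < α, KrkLe P β a' (insert a B)))
termination_by α

/-- An indiscernible support function for the action of `P` on `I`. -/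
structure IndiscernibleSupp (P : Type*) [Group P] (I : Type*) [MulAction P I] [DecidableEq I] where
  supp : Finset I → Finset ℕ
  mono : ∀ A B : Finset I, A ⊆ B → supp A ⊆ supp B
  indis : ∀ A B : Finset I, A ⊆ B → ∀ v' : Finset ℕ, supp A ⊆ v' →
    (v' \ supp A).card = (supp B \ supp A).card →
    ∃ g : P, (∀ a ∈ A, g • a = a) ∧ supp (B.image (fun x => g • x)) = v'

lemma exists_fresh (T : Finset ℕ) (n : ℕ) : ∃ v : Finset ℕ, v.card = n ∧ Disjoint v T := by
  refine ⟨(Finset.range n).image (fun i => i + (T.sup id + 1)), ?_, ?_⟩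
  · rw [Finset.card_image_of_injective _ (add_left_injective _), Finset.card_range]
  · rw [Finset.disjoint_left]
    intro x hx hxT
    simp only [Finset.mem_image, Finset.mem_range] at hx
    obtain ⟨i, _, rfl⟩ := hx
    have := Finset.le_sup (f := id) hxT
    simp only [id] at this
    omega

lemma image_insert_fix {P : Type*} [Group P] {I : Type*} [MulAction P I] [DecidableEq I]
    (g : P) (B : Finset I) (hg : ∀ b ∈ B, g • b = b) (c : I) :
    (insert c B).image (fun x => g • x) = insert (g • c) B := by
  rw [Finset.image_insert]
  congr 1
  calc B.image (fun x => g • x) = B.image id := Finset.image_congr (fun x hx => hg x hx)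
    _ = B := Finset.image_id

lemma key {P : Type*} [Group P] {I : Type*} [MulAction P I] [DecidableEq I]
    (S : IndiscernibleSupp P I) :
    ∀ α : Ordinal, ∀ B : Finset I, ∀ a : I, KrkLe P α a (B : Set I) →
      S.supp (insert a B) = S.supp B := by
  intro α
  induction α using Ordinal.induction with
  | _ α IH =>
  intro B a h
  have mono1 : S.supp B ⊆ S.supp (insert a B) := S.mono _ _ (Finset.subset_insert _ _)
  by_cases hsub : S.supp (insert a B) ⊆ S.supp B
  · exact Finset.Subset.antisymm hsub mono1
  exfalso
  set n := (S.supp (insert a B) \ S.supp B).card with hn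
  have hnpos : 0 < n := by
    rw [hn, Finset.card_pos]
    obtain ⟨x, hx1, hx2⟩ := Finset.not_subset.mp hsub
    exact ⟨x, Finset.mem_sdiff.mpr ⟨hx1, hx2⟩⟩
  rw [KrkLe] at h
  obtain h1 | ⟨c, hc⟩ | h3 := h
  · -- base case: every g fixing B fixes a
    obtain ⟨v'', hcard, hdisj⟩ := exists_fresh (S.supp (insert a B)) n
    have hcond : ((S.supp B ∪ v'') \ S.supp B).card
        = (S.supp (insert a B) \ S.supp B).card := by
      rw [Finset.union_sdiff_left,
        Finset.sdiff_eq_self_of_disjoint (Finset.disjoint_of_subset_right mono1 hdisj)]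
      exact hcard
    obtain ⟨g, hg1, hg2⟩ := S.indis B (insert a B) (Finset.subset_insert _ _)
      (S.supp B ∪ v'') Finset.subset_union_left hcond
    have hga : g • a = a := h1 g (fun b hb => hg1 b hb)
    rw [image_insert_fix g B hg1 a, hga] at hg2
    obtain ⟨x, hx⟩ := Finset.card_pos.mp (hcard ▸ hnpos)
    have hx1 : x ∈ S.supp (insert a B) := hg2 ▸ Finset.mem_union_right _ hx
    exact Finset.disjoint_left.mp hdisj hx hx1
  · -- disjointifying case with witness c
    obtain ⟨v'', hcard, hdisj⟩ := exists_fresh (S.supp (insert a B) ∪ S.supp (insert c B))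
      ((S.supp (insert c B) \ S.supp B).card)
    have hdisj1 : Disjoint v'' (S.supp (insert a B)) :=
      Finset.disjoint_of_subset_right Finset.subset_union_left hdisj
    have hcond : ((S.supp B ∪ v'') \ S.supp B).card
        = (S.supp (insert c B) \ S.supp B).card := by
      rw [Finset.union_sdiff_left, Finset.sdiff_eq_self_of_disjoint, hcard]
      exact Finset.disjoint_of_subset_right
        (mono1.trans (Finset.subset_union_left)) hdisj
    obtain ⟨g, hg1, hg2⟩ := S.indis B (insert c B) (Finset.subset_insert _ _)
      (S.supp B ∪ v'') Finset.subset_union_left hcond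
    rw [image_insert_fix g B hg1 c] at hg2
    set c' := g • c with hc'
    obtain ⟨β, hβ, hk⟩ := hc c' ⟨g, fun b hb => hg1 b hb, rfl⟩
    rw [← Finset.coe_insert] at hk
    have heq := IH β hβ (insert c' B) a hk
    have hsub2 : S.supp (insert a B) ⊆ S.supp B ∪ v'' := by
      calc S.supp (insert a B) ⊆ S.supp (insert a (insert c' B)) :=
            S.mono _ _ (Finset.insert_subset_insert _ (Finset.subset_insert _ _))
        _ = S.supp (insert c' B) := heq
        _ = S.supp B ∪ v'' := hg2
    apply hsub
    intro x hx
    rcases Finset.mem_union.mp (hsub2 hx) with h' | h'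
    · exact h'
    · exact absurd hx (Finset.disjoint_left.mp hdisj1 h')
  · -- splitting case
    obtain ⟨v'', hcard, hdisj⟩ := exists_fresh (S.supp (insert a B)) n
    have hcond : ((S.supp B ∪ v'') \ S.supp B).card
        = (S.supp (insert a B) \ S.supp B).card := by
      rw [Finset.union_sdiff_left,
        Finset.sdiff_eq_self_of_disjoint (Finset.disjoint_of_subset_right mono1 hdisj)]
      exact hcard
    obtain ⟨g, hg1, hg2⟩ := S.indis B (insert a B) (Finset.subset_insert _ _)
      (S.supp B ∪ v'') Finset.subset_union_left hcond
    rw [image_insert_fix g B hg1 a] at hg2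
    set a' := g • a with ha'
    rcases h3 a' ⟨g, fun b hb => hg1 b hb, rfl⟩ with ⟨β, hβ, hk⟩ | ⟨β, hβ, hk⟩
    · rw [← Finset.coe_insert] at hk
      have heq := IH β hβ (insert a' B) a hk
      have hsub2 : S.supp (insert a B) ⊆ S.supp B ∪ v'' := by
        calc S.supp (insert a B) ⊆ S.supp (insert a (insert a' B)) :=
              S.mono _ _ (Finset.insert_subset_insert _ (Finset.subset_insert _ _))
          _ = S.supp (insert a' B) := heq
          _ = S.supp B ∪ v'' := hg2
      apply hsub
      intro x hx
      rcases Finset.mem_union.mp (hsub2 hx) with h' | h'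
      · exact h'
      · exact absurd hx (Finset.disjoint_left.mp hdisj h')
    · rw [← Finset.coe_insert] at hk
      have heq := IH β hβ (insert a B) a' hk
      obtain ⟨x, hx⟩ := Finset.card_pos.mp (hcard ▸ hnpos)
      have hx1 : x ∈ S.supp (insert a' (insert a B)) := by
        apply S.mono (insert a' B) _ (Finset.insert_subset_insert _ (Finset.subset_insert _ _))
        exact hg2 ▸ Finset.mem_union_right _ hx
      rw [heq] at hx1
      exact Finset.disjoint_left.mp hdisj hx hx1

/-- If `a ∈ cl^min(B)`, i.e. `Krk(a, B) < ∞`, then `supp(B ∪ {a}) = supp(B)`. -/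
theorem stmt_16 {P : Type*} [Group P] {I : Type*} [MulAction P I] [DecidableEq I]
    (S : IndiscernibleSupp P I) (B : Finset I) (a : I)
    (h : ∃ α : Ordinal, KrkLe P α a (B : Set I)) :
    S.supp (insert a B) = S.supp B := by
  obtain ⟨α, hα⟩ := h
  exact key S α B a hα
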